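/- Let k ≥ 2 and let A_1, …, A_k be finite nonempty sets of integers. For each i let A_i' be the set consisting of the smallest and the largest elements of A_i. Put S_i = A_1 + ⋯ + A_{i−1} + A_{i+1} + ⋯ + A_k (the sum omitting A_i), S_i' = A_1 + ⋯ + A_{i−1} + A_i' + A_{i+1} + ⋯ + A_k, and S' = ⋃_{i=1}^k S_i'. Then (k−1)·|S'| ≥ Σ_{i=1}^k |S_i| − 1. -/

import Mathlib

open Pointwise

/-- Any element of a pointwise sum of finsets lies between the sum of the minima
and the sum of the maxima. -/
lemma sum_mem_bounds_aux {k : ℕ} (A : Fin k → Finset ℤ) (hA : ∀ i, (A i).Nonempty)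
    (F : Finset (Fin k)) :
    ∀ x ∈ ∑ j ∈ F, A j,
      (∑ j ∈ F, (A j).min' (hA j)) ≤ x ∧ x ≤ ∑ j ∈ F, (A j).max' (hA j) := by
  classical
  induction F using Finset.induction_on with
  | empty =>
      intro x hx
      simp only [Finset.sum_empty] at hx ⊢
      have : x = 0 := by simpa [Finset.mem_zero] using hx
      simp [this]
  | insert _ _ hnot ih =>
      rename_i a F
      intro x hx
      rw [Finset.sum_insert hnot] at hx
      obtain ⟨b, hb, c, hc, rfl⟩ := Finset.mem_add.mp hx
      obtain ⟨h1, h2⟩ := ih c hc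
      rw [Finset.sum_insert hnot, Finset.sum_insert hnot]
      constructor
      · have := (A a).min'_le b hb
        linarith
      · have := (A a).le_max' b hb
        linarith

theorem subsums_lower_bound (k : ℕ) (hk : 2 ≤ k)
    (A : Fin k → Finset ℤ) (hA : ∀ i, (A i).Nonempty)
    (A' : Fin k → Finset ℤ)
    (hA' : ∀ i, A' i = {(A i).min' (hA i), (A i).max' (hA i)})
    (Si : Fin k → Finset ℤ)
    (hSi : ∀ i, Si i = ∑ j ∈ Finset.univ.erase i, A j)
    (Si' : Fin k → Finset ℤ)
    (hSi' : ∀ i, Si' i = A' i + Si i)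
    (S' : Finset ℤ) (hS' : S' = Finset.univ.biUnion Si') :
    ((k : ℤ) - 1) * S'.card ≥ (∑ i, ((Si i).card : ℤ)) - 1 := by
  classical
  set mn : Fin k → ℤ := fun i => (A i).min' (hA i) with hmn
  set mx : Fin k → ℤ := fun i => (A i).max' (hA i) with hmx
  have hmnmx : ∀ i, mn i ≤ mx i := fun i => Finset.min'_le _ _ ((A i).max'_mem (hA i))
  set d : Fin k → ℤ := fun i => mx i - mn i with hd
  set mm : ℤ := ∑ i, mn i with hmm
  set MM : ℤ := ∑ i, mx i with hMM
  set thr : Fin k → ℤ := fun i => mm + ∑ j ∈ Finset.Iio i, d j with hthr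
  set f : Fin k → ℤ → ℤ := fun i s => if s + mn i ≤ thr i then s + mn i else s + mx i with hf
  set T : Fin k → Finset ℤ := fun i => (Si i).image (f i) with hT
  -- injectivity of f i on Si i
  have hcardT : ∀ i, (T i).card = (Si i).card := by
    intro i
    apply Finset.card_image_of_injOn
    intro s1 h1 s2 h2 heq
    simp only [hf] at heq
    by_cases c1 : s1 + mn i ≤ thr i <;> by_cases c2 : s2 + mn i ≤ thr i <;>
      simp only [c1, c2, if_pos, if_neg, if_true, if_false] at heq <;>
      [linarith; (have := hmnmx i; linarith); (have := hmnmx i; linarith); linarith]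
  -- T i ⊆ S'
  have hTS : ∀ i, T i ⊆ S' := by
    intro i z hz
    obtain ⟨s, hs, rfl⟩ := Finset.mem_image.mp hz
    have hmem : f i s ∈ A' i + Si i := by
      have hmn' : mn i ∈ A' i := by rw [hA' i]; simp [hmn]
      have hmx' : mx i ∈ A' i := by rw [hA' i]; simp [hmx]
      by_cases c : s + mn i ≤ thr i
      · have : f i s = mn i + s := by simp [hf, c, add_comm]
        rw [this]; exact Finset.add_mem_add hmn' hs
      · have : f i s = mx i + s := by simp [hf, c, add_comm]
        rw [this]; exact Finset.add_mem_add hmx' hs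
    rw [hS']
    exact Finset.mem_biUnion.mpr ⟨i, Finset.mem_univ i, by rw [hSi' i]; exact hmem⟩
  -- bounds for elements of T i
  have hbounds : ∀ i, ∀ z ∈ T i, mm ≤ z ∧ z ≤ MM := by
    intro i z hz
    obtain ⟨s, hs, rfl⟩ := Finset.mem_image.mp hz
    rw [hSi i] at hs
    obtain ⟨hlo, hhi⟩ := sum_mem_bounds_aux A hA _ s hs
    have hmmsplit : mm = mn i + ∑ j ∈ Finset.univ.erase i, mn j := by
      rw [hmm, Finset.add_sum_erase _ _ (Finset.mem_univ i)]
    have hMMsplit : MM = mx i + ∑ j ∈ Finset.univ.erase i, mx j := by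
      rw [hMM, Finset.add_sum_erase _ _ (Finset.mem_univ i)]
    have hbnd : ∑ j ∈ Finset.univ.erase i, mn j ≤ s ∧
        s ≤ ∑ j ∈ Finset.univ.erase i, mx j := ⟨hlo, hhi⟩
    have := hmnmx i
    by_cases c : s + mn i ≤ thr i <;> simp only [hf, c, if_true, if_false, if_pos, if_neg,
      not_false_iff] <;> constructor <;> linarith [hbnd.1, hbnd.2]
  -- the block-selection lemma
  have hblock : ∀ z : ℤ, mm < z → z ≤ MM → ∃ t : Fin k, thr t < z ∧ z ≤ thr t + d t := by
    intro z hz1 hz2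
    have hk0 : 0 < k := by omega
    set i0 : Fin k := ⟨0, hk0⟩ with hi0
    have hIio0 : Finset.Iio i0 = ∅ := by
      ext j; simp [Fin.lt_def, hi0]
    have hG : i0 ∈ Finset.univ.filter (fun i => thr i < z) := by
      simp only [Finset.mem_filter, Finset.mem_univ, true_and, hthr, hIio0]
      simpa using hz1
    set G := Finset.univ.filter (fun i => thr i < z) with hGdef
    have hGne : G.Nonempty := ⟨i0, hG⟩
    set t := G.max' hGne with ht
    have htG : t ∈ G := G.max'_mem hGne
    have ht1 : thr t < z := (Finset.mem_filter.mp htG).2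
    refine ⟨t, ht1, ?_⟩
    have hsum_insert : thr t + d t = mm + ∑ j ∈ insert t (Finset.Iio t), d j := by
      rw [Finset.sum_insert (by simp)]
      simp [hthr]; ring
    by_cases hlast : (t : ℕ) + 1 < k
    · set t' : Fin k := ⟨(t : ℕ) + 1, hlast⟩ with ht'
      have htt' : t < t' := by simp [Fin.lt_def, ht']
      have ht'G : t' ∉ G := by
        intro h
        exact absurd (G.le_max' t' h) (not_le.mpr htt')
      have ht'z : z ≤ thr t' := by
        by_contra h
        exact ht'G (Finset.mem_filter.mpr ⟨Finset.mem_univ _, not_le.mp h⟩)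
      have hIio' : Finset.Iio t' = insert t (Finset.Iio t) := by
        ext j
        simp only [Finset.mem_Iio, Finset.mem_insert, Fin.lt_def, ht', Fin.ext_iff]
        omega
      calc z ≤ thr t' := ht'z
        _ = mm + ∑ j ∈ insert t (Finset.Iio t), d j := by rw [hthr]; simp [hIio']
        _ = thr t + d t := hsum_insert.symm
    · have huniv : insert t (Finset.Iio t) = Finset.univ := by
        ext j
        simp only [Finset.mem_insert, Finset.mem_Iio, Finset.mem_univ, iff_true,
          Fin.lt_def, Fin.ext_iff]
        have := j.isLt
        have := t.isLt
        omega
      have : thr t + d t = MM := by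
        rw [hsum_insert, huniv]
        have : ∑ j, d j = MM - mm := by
          simp only [hd, hMM, hmm, Finset.sum_sub_distrib]
        rw [this]; ring
      omega
  -- z excluded from T t
  have hexcl : ∀ (t : Fin k) (z : ℤ), thr t < z → z ≤ thr t + d t → z ∉ T t := by
    intro t z h1 h2 hz
    obtain ⟨s, hs, hfs⟩ := Finset.mem_image.mp hz
    by_cases c : s + mn t ≤ thr t
    · simp only [hf, c, if_true, if_pos] at hfs
      omega
    · simp only [hf, c, if_false, if_neg, not_false_iff] at hfs
      have : z = s + mn t + d t := by simp [hd]; omega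
      omega
  -- counting
  have hcount : ∀ z ∈ S',
      (Finset.univ.filter (fun i => z ∈ T i)).card ≤ (k - 1) + (if z = mm then 1 else 0) := by
    intro z _
    by_cases hzmm : z = mm
    · simp only [hzmm, if_true]
      calc (Finset.univ.filter (fun i => (mm : ℤ) ∈ T i)).card
          ≤ (Finset.univ : Finset (Fin k)).card := Finset.card_filter_le _ _
        _ = k := by simp
        _ = (k - 1) + 1 := by omega
    · simp only [hzmm, if_false, add_zero]
      by_cases hne : (Finset.univ.filter (fun i => z ∈ T i)).Nonempty
      · obtain ⟨i, hi⟩ := hne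
        have hzi : z ∈ T i := (Finset.mem_filter.mp hi).2
        obtain ⟨hlo, hhi⟩ := hbounds i z hzi
        have hlt : mm < z := lt_of_le_of_ne hlo (fun h => hzmm h.symm)
        obtain ⟨t, ht1, ht2⟩ := hblock z hlt hhi
        have hsub : Finset.univ.filter (fun i => z ∈ T i) ⊆ Finset.univ.erase t := by
          intro j hj
          rcases Finset.mem_filter.mp hj with ⟨_, hjT⟩
          refine Finset.mem_erase.mpr ⟨?_, Finset.mem_univ _⟩
          rintro rfl
          exact hexcl j z ht1 ht2 hjT
        calc (Finset.univ.filter (fun i => z ∈ T i)).card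
            ≤ (Finset.univ.erase t).card := Finset.card_le_card hsub
          _ = k - 1 := by rw [Finset.card_erase_of_mem (Finset.mem_univ t)]; simp
      · rw [Finset.not_nonempty_iff_eq_empty.mp hne]
        simp
  -- main counting identity
  have hmain : (∑ i, (Si i).card) ≤ (k - 1) * S'.card + 1 := by
    have h1 : ∀ i, (Si i).card = (S'.filter (fun z => z ∈ T i)).card := by
      intro i
      rw [← hcardT i]
      congr 1
      rw [Finset.filter_mem_eq_inter, Finset.inter_eq_right.mpr (hTS i)]
    calc (∑ i, (Si i).card)
        = ∑ i, (S'.filter (fun z => z ∈ T i)).card := by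
          exact Finset.sum_congr rfl (fun i _ => h1 i)
      _ = ∑ i, ∑ z ∈ S', (if z ∈ T i then 1 else 0) := by
          exact Finset.sum_congr rfl (fun i _ => Finset.card_filter _ _)
      _ = ∑ z ∈ S', ∑ i, (if z ∈ T i then 1 else 0) := Finset.sum_comm
      _ = ∑ z ∈ S', (Finset.univ.filter (fun i => z ∈ T i)).card := by
          exact Finset.sum_congr rfl (fun z _ => (Finset.card_filter _ _).symm)
      _ ≤ ∑ z ∈ S', ((k - 1) + (if z = mm then 1 else 0)) :=
          Finset.sum_le_sum hcount
      _ = (k - 1) * S'.card + ∑ z ∈ S', (if z = mm then 1 else 0) := by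
          rw [Finset.sum_add_distrib, Finset.sum_const, smul_eq_mul, mul_comm]
      _ ≤ (k - 1) * S'.card + 1 := by
          gcongr
          rw [Finset.sum_ite_eq' S' mm (fun _ => 1)]
          split <;> omega
  -- convert to ℤ
  have hk1 : 1 ≤ k := by omega
  have hcast : ((∑ i, (Si i).card : ℕ) : ℤ) ≤ (((k - 1) * S'.card + 1 : ℕ) : ℤ) :=
    Int.ofNat_le.mpr hmain
  push_cast [Nat.cast_sub hk1] at hcast
  rw [ge_iff_le]
  linarith
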